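/- Let n ≥ 1, let x : Fin n → EuclideanSpace ℝ (Fin d) be n vectors, and let H ⊆ Fin n be a nonempty set of honest indices with f = n − |H| ≤ ⌈n/2⌉ − 1. If m ∈ EuclideanSpace ℝ (Fin d) is a coordinate-wise median, i.e. for every coordinate j, #{i : (x i) j ≤ m j} ≥ ⌈n/2⌉ and #{i : (x i) j ≥ m j} ≥ ⌈n/2⌉, then for every coordinate j one has min_{i ∈ H} (x i) j ≤ m j ≤ max_{i ∈ H} (x i) j. -/
import Mathlib

/-- A coordinate-wise median of vectors with a dominating honest subset
lies, in every coordinate, between the minimum and the maximum of the honest values. -/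
theorem coordinatewise_median_between_honest_min_max
    (d n : ℕ) (hn : 1 ≤ n) (x : Fin n → EuclideanSpace ℝ (Fin d))
    (H : Finset (Fin n)) (hH : H.Nonempty)
    (hf : n - H.card ≤ (n + 1) / 2 - 1)
    (m : EuclideanSpace ℝ (Fin d))
    (hmed : ∀ j : Fin d,
      (n + 1) / 2 ≤ (Finset.univ.filter (fun i => x i j ≤ m j)).card ∧
      (n + 1) / 2 ≤ (Finset.univ.filter (fun i => m j ≤ x i j)).card) :
    ∀ j : Fin d,
      H.inf' hH (fun i => x i j) ≤ m j ∧ m j ≤ H.sup' hH (fun i => x i j) := by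
  intro j
  obtain ⟨h1, h2⟩ := hmed j
  have hhalf : 1 ≤ (n + 1) / 2 := Nat.one_le_div_iff (by norm_num) |>.2 (by omega)
  have key : ∀ (A : Finset (Fin n)), (n + 1) / 2 ≤ A.card → ∃ i ∈ H, i ∈ A := by
    intro A hA
    by_contra hcon
    push_neg at hcon
    have hsub : A ⊆ Hᶜ := fun i hi => Finset.mem_compl.2 fun hiH => hcon i hiH hi
    have := Finset.card_le_card hsub
    rw [Finset.card_compl, Fintype.card_fin] at this
    omega
  constructor
  · obtain ⟨i, hiH, hiA⟩ := key _ h1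
    have : x i j ≤ m j := (Finset.mem_filter.1 hiA).2
    exact le_trans (Finset.inf'_le _ hiH) this
  · obtain ⟨i, hiH, hiA⟩ := key _ h2
    have : m j ≤ x i j := (Finset.mem_filter.1 hiA).2
    exact le_trans this (Finset.le_sup' (fun i => x i j) hiH)
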